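/- Let p(s) = Σ_{k=0}^{m} a_k s^k be a symmetric trapezoidal polynomial with all a_k > 0 whose stable part has length l, and let [n] = 1 + s + ... + s^{n−1} with m ≥ n. Then the product p(s)·[n] is a symmetric trapezoidal polynomial. -/
import Mathlib


open Polynomial

/-- `qpoly n = 1 + s + ⋯ + s^(n-1)`, denoted `[n]` in the paper. -/
noncomputable def qpoly (n : ℕ) : Polynomial ℝ :=
  ∑ i ∈ Finset.range n, Polynomial.X ^ i

/-- All coefficients of `p` over its support `0, …, natDegree p` are positive. -/
def PosCoeffs (p : Polynomial ℝ) : Prop :=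
  ∀ k ≤ p.natDegree, 0 < p.coeff k

/-- `p` is symmetric: its coefficient sequence over its support reads the same
forwards and backwards. -/
def SymmetricPoly (p : Polynomial ℝ) : Prop :=
  ∀ k ≤ p.natDegree, p.coeff k = p.coeff (p.natDegree - k)

/-- `p` is trapezoidal: its coefficients strictly increase, then are constant,
then strictly decrease. -/
def Trapezoidal (p : Polynomial ℝ) : Prop :=
  ∃ i j : ℕ, i ≤ j ∧ j ≤ p.natDegree ∧
    (∀ k, k < i → p.coeff k < p.coeff (k + 1)) ∧
    (∀ k, i ≤ k → k < j → p.coeff k = p.coeff (k + 1)) ∧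
    (∀ k, j ≤ k → k < p.natDegree → p.coeff (k + 1) < p.coeff k)

/-- `p` has a run of `l + 1` equal consecutive coefficients within its support. -/
def HasRun (p : Polynomial ℝ) (l : ℕ) : Prop :=
  ∃ k0 : ℕ, k0 + l ≤ p.natDegree ∧ ∀ i ≤ l, p.coeff (k0 + i) = p.coeff k0

/-- The stable part of `p` has length `l`: `l` is the largest integer such that
some `l + 1` consecutive coefficients of `p` are all equal. -/
def StableLength (p : Polynomial ℝ) (l : ℕ) : Prop :=
  HasRun p l ∧ ∀ l', HasRun p l' → l' ≤ l

/-! Auxiliary material for the main theorem. -/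

/-- Zero-padded coefficient function on `ℤ`. -/
noncomputable def Af (p : Polynomial ℝ) (t : ℤ) : ℝ :=
  if 0 ≤ t then p.coeff t.toNat else 0

/-- Height profile of a symmetric trapezoidal coefficient sequence. -/
def Hf (i m : ℕ) (t : ℤ) : ℤ :=
  min (i : ℤ) (max (-1) (min t ((m : ℤ) - t)))

lemma chain_mono (f : ℕ → ℝ) (b : ℕ) (h : ∀ k, k < b → f k < f (k + 1)) :
    ∀ u v : ℕ, u ≤ v → v ≤ b → f u ≤ f v := by
  intro u v huv hvb
  induction v, huv using Nat.le_induction with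
  | base => exact le_rfl
  | succ w hw ih => exact le_trans (ih (by omega)) (le_of_lt (h w (by omega)))

lemma chain_strict (f : ℕ → ℝ) (b : ℕ) (h : ∀ k, k < b → f k < f (k + 1)) :
    ∀ u v : ℕ, u < v → v ≤ b → f u < f v := by
  intro u v huv hvb
  have h1 : f u ≤ f (v - 1) := chain_mono f b h u (v - 1) (by omega) (by omega)
  have h2 := h (v - 1) (by omega)
  rw [Nat.sub_add_cancel (by omega)] at h2
  linarith

lemma chain_flat (f : ℕ → ℝ) (i j : ℕ) (h : ∀ k, i ≤ k → k < j → f k = f (k + 1)) :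
    ∀ u v : ℕ, i ≤ u → u ≤ v → v ≤ j → f u = f v := by
  intro u v hiu huv hvj
  induction v, huv using Nat.le_induction with
  | base => rfl
  | succ w hw ih => rw [ih (by omega), h w (by omega) (by omega)]

lemma chain_dec (f : ℕ → ℝ) (j m : ℕ) (h : ∀ k, j ≤ k → k < m → f (k + 1) < f k) :
    ∀ u v : ℕ, j ≤ u → u ≤ v → v ≤ m → f v ≤ f u := by
  intro u v hju huv hvm
  induction v, huv using Nat.le_induction with
  | base => exact le_rfl
  | succ w hw ih => exact le_trans (le_of_lt (h w (by omega) (by omega))) (ih (by omega))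

lemma chain_dec_strict (f : ℕ → ℝ) (j m : ℕ) (h : ∀ k, j ≤ k → k < m → f (k + 1) < f k) :
    ∀ u v : ℕ, j ≤ u → u < v → v ≤ m → f v < f u := by
  intro u v hju huv hvm
  have h1 : f v ≤ f (u + 1) := chain_dec f j m h (u + 1) v (by omega) (by omega) hvm
  have h2 := h u hju (by omega)
  linarith

theorem symmetric_trapezoidal_mul_qpoly (p : Polynomial ℝ) (m n l : ℕ)
    (hdeg : p.natDegree = m) (hn : 1 ≤ n) (hmn : n ≤ m)
    (hpos : PosCoeffs p) (hsym : SymmetricPoly p) (htrap : Trapezoidal p)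
    (hlen : StableLength p l) :
    SymmetricPoly (p * qpoly n) ∧ Trapezoidal (p * qpoly n) := by
  classical
  obtain ⟨i, j, hij, hjm, hinc, hflat, hdec⟩ := htrap
  rw [hdeg] at hjm hdec
  -- basic facts about p
  have h0pos : 0 < p.coeff 0 := hpos 0 (Nat.zero_le _)
  have hpne : p ≠ 0 := by
    intro h; rw [h] at h0pos; simp at h0pos
  have hczero : ∀ t : ℕ, m < t → p.coeff t = 0 := by
    intro t ht
    apply Polynomial.coeff_eq_zero_of_natDegree_lt
    omega
  have hsym' : ∀ k : ℕ, k ≤ m → p.coeff k = p.coeff (m - k) := by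
    intro k hk
    have := hsym k (by omega)
    rwa [hdeg] at this
  have hpos' : ∀ k : ℕ, k ≤ m → 0 < p.coeff k := by
    intro k hk; exact hpos k (by omega)
  -- facts about qpoly
  have hqcoeff : ∀ k : ℕ, (qpoly n).coeff k = if k < n then 1 else 0 := by
    intro k
    simp only [qpoly, Polynomial.finset_sum_coeff, Polynomial.coeff_X_pow]
    rw [Finset.sum_ite_eq]
    simp [Finset.mem_range]
  have hqne : qpoly n ≠ 0 := by
    intro h
    have := hqcoeff 0
    rw [h] at this
    simp only [Polynomial.coeff_zero] at this
    rw [if_pos (by omega)] at this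
    exact zero_ne_one this
  have hqdeg : (qpoly n).natDegree = n - 1 := by
    apply le_antisymm
    · apply Polynomial.natDegree_le_iff_coeff_eq_zero.mpr
      intro k hk
      rw [hqcoeff, if_neg (by omega)]
    · apply Polynomial.le_natDegree_of_ne_zero
      rw [hqcoeff, if_pos (by omega)]
      exact one_ne_zero
  have hM : (p * qpoly n).natDegree = m + (n - 1) := by
    rw [Polynomial.natDegree_mul hpne hqne, hqdeg, hdeg]
  set M := m + (n - 1) with hMdef
  -- coefficient formula
  have hcoeff : ∀ k : ℕ, (p * qpoly n).coeff k = ∑ x ∈ Finset.range n, Af p ((k : ℤ) - x) := by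
    intro k
    rw [qpoly, Finset.mul_sum, Polynomial.finset_sum_coeff]
    apply Finset.sum_congr rfl
    intro x hx
    rw [Polynomial.coeff_mul_X_pow']
    by_cases h : x ≤ k
    · rw [if_pos h]
      simp only [Af]
      rw [if_pos (by omega : (0:ℤ) ≤ (k:ℤ) - x)]
      congr 1
      omega
    · rw [if_neg h]
      simp only [Af]
      rw [if_neg (by omega : ¬ (0:ℤ) ≤ (k:ℤ) - x)]
  -- A lemmas
  have hApos : ∀ t : ℤ, 0 ≤ t → t ≤ (m : ℤ) → 0 < Af p t := by
    intro t h1 h2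
    simp only [Af]
    rw [if_pos h1]
    exact hpos' t.toNat (by omega)
  have hAsymm : ∀ t : ℤ, Af p t = Af p ((m : ℤ) - t) := by
    intro t
    simp only [Af]
    by_cases h1 : 0 ≤ t
    · by_cases h2 : t ≤ (m : ℤ)
      · rw [if_pos h1, if_pos (by omega)]
        have h3 := hsym' t.toNat (by omega)
        have e : ((m : ℤ) - t).toNat = m - t.toNat := by omega
        rw [e]
        exact h3
      · rw [if_pos h1, if_neg (by omega)]
        exact hczero t.toNat (by omega)
    · rw [if_neg h1, if_pos (by omega)]
      exact (hczero ((m : ℤ) - t).toNat (by omega)).symm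
  -- i + j = m
  have hij2 : i + j = m := by
    by_contra hne
    rcases Nat.lt_or_ge (i + j) m with hlt | hge
    · have h1 : p.coeff (m - i) < p.coeff j :=
        chain_dec_strict (fun k => p.coeff k) j m hdec j (m - i) le_rfl (by omega) (by omega)
      have h2 : p.coeff i = p.coeff j :=
        chain_flat (fun k => p.coeff k) i j hflat i j le_rfl hij le_rfl
      have h3 := hsym' i (by omega)
      linarith
    · have hgt : m < i + j := by omega
      have h1 : p.coeff (m - j) < p.coeff i :=
        chain_strict (fun k => p.coeff k) i hinc (m - j) i (by omega) le_rfl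
      have h2 : p.coeff i = p.coeff j :=
        chain_flat (fun k => p.coeff k) i j hflat i j le_rfl hij le_rfl
      have h3 := hsym' j (by omega)
      linarith
  -- A through H
  have hAH : ∀ t : ℤ, Af p t = Af p (Hf i m t) := by
    have key : ∀ t : ℤ, 2 * t ≤ (m : ℤ) → Af p t = Af p (Hf i m t) := by
      intro t ht
      rcases lt_or_ge t 0 with h | h
      · have hH : Hf i m t = -1 := by simp only [Hf]; omega
        rw [hH]
        simp only [Af]
        rw [if_neg (by omega), if_neg (by omega)]
      · rcases le_or_gt t (i : ℤ) with h2 | h2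
        · have hH : Hf i m t = t := by simp only [Hf]; omega
          rw [hH]
        · have hH : Hf i m t = (i : ℤ) := by simp only [Hf]; omega
          rw [hH]
          simp only [Af]
          rw [if_pos h, if_pos (by omega : (0:ℤ) ≤ (i:ℤ))]
          have e : ((i : ℤ)).toNat = i := by omega
          rw [e]
          exact (chain_flat (fun k => p.coeff k) i j hflat i t.toNat le_rfl (by omega) (by omega)).symm
    intro t
    rcases le_or_gt (2 * t) (m : ℤ) with h | h
    · exact key t h
    · rw [hAsymm t, key ((m : ℤ) - t) (by omega)]
      congr 1
      simp only [Hf]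
      omega
  -- strict monotonicity of A on [-1, i]
  have hAmono : ∀ u v : ℤ, -1 ≤ u → u < v → v ≤ (i : ℤ) → Af p u < Af p v := by
    intro u v hu huv hv
    have hv0 : 0 ≤ v := by omega
    rcases eq_or_lt_of_le hu with h | h
    · have h0 : Af p u = 0 := by
        simp only [Af]
        rw [if_neg (by omega)]
      rw [h0]
      exact hApos v hv0 (by omega)
    · simp only [Af]
      rw [if_pos (by omega : (0:ℤ) ≤ u), if_pos hv0]
      exact chain_strict (fun k => p.coeff k) i hinc u.toNat v.toNat (by omega) (by omega)
  -- H bounds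
  have hHrange : ∀ t : ℤ, -1 ≤ Hf i m t ∧ Hf i m t ≤ (i : ℤ) := by
    intro t; simp only [Hf]; omega
  -- difference formula
  have hd : ∀ k : ℕ, (p * qpoly n).coeff (k + 1) - (p * qpoly n).coeff k
      = Af p ((k : ℤ) + 1) - Af p ((k : ℤ) + 1 - n) := by
    intro k
    rw [hcoeff, hcoeff, ← Finset.sum_sub_distrib]
    have h2 : ∀ x ∈ Finset.range n,
        Af p (((k + 1 : ℕ) : ℤ) - x) - Af p ((k : ℤ) - x)
        = (fun x : ℕ => Af p ((k : ℤ) + 1 - x)) x - (fun x : ℕ => Af p ((k : ℤ) + 1 - x)) (x + 1) := by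
      intro x _
      simp only
      have e1 : ((k + 1 : ℕ) : ℤ) - x = (k : ℤ) + 1 - x := by push_cast; ring
      have e2 : (k : ℤ) - x = (k : ℤ) + 1 - ((x + 1 : ℕ) : ℤ) := by push_cast; ring
      rw [e1, e2]
    rw [Finset.sum_congr rfl h2, Finset.sum_range_sub']
    norm_num
  -- symmetry of the product
  have hsymm : SymmetricPoly (p * qpoly n) := by
    intro k hk
    rw [hM] at hk ⊢
    rw [hcoeff, hcoeff]
    have hrefl := Finset.sum_range_reflect (fun x : ℕ => Af p (((M - k : ℕ) : ℤ) - x)) n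
    rw [← hrefl]
    apply Finset.sum_congr rfl
    intro x hx
    rw [Finset.mem_range] at hx
    rw [hAsymm ((k : ℤ) - x)]
    congr 1
    omega
  refine ⟨hsymm, ?_⟩
  -- find the left end of the plateau of the product
  have hex : ∃ k : ℕ, Hf i m ((k : ℤ) + 1) ≤ Hf i m ((k : ℤ) + 1 - n) := by
    refine ⟨M - 1, ?_⟩
    simp only [Hf]
    omega
  set I := Nat.find hex with hIdef
  have hI_spec : Hf i m ((I : ℤ) + 1) ≤ Hf i m ((I : ℤ) + 1 - n) := Nat.find_spec hex
  have hI_min : ∀ k : ℕ, k < I → Hf i m ((k : ℤ) + 1 - n) < Hf i m ((k : ℤ) + 1) := by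
    intro k hk
    have h := Nat.find_min hex hk
    exact lt_of_not_ge h
  have hfind_le : I ≤ M / 2 := by
    apply Nat.find_min'
    simp only [Hf]
    omega
  have hIJ : I ≤ M - I := by omega
  -- zeros propagate
  have hzero : ∀ k : ℕ, I ≤ k → 2 * (k + 1) ≤ m + n →
      Hf i m ((k : ℤ) + 1) = Hf i m ((k : ℤ) + 1 - n) := by
    intro k hIk h2
    have h1 := hI_spec
    have hIk' : (I : ℤ) ≤ k := by exact_mod_cast hIk
    simp only [Hf] at h1 ⊢
    omega
  -- sign conversions
  have hdpos : ∀ k : ℕ, Hf i m ((k : ℤ) + 1 - n) < Hf i m ((k : ℤ) + 1) →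
      (p * qpoly n).coeff k < (p * qpoly n).coeff (k + 1) := by
    intro k hlt
    have h1 := hd k
    have h2 : Af p ((k : ℤ) + 1 - n) < Af p ((k : ℤ) + 1) := by
      rw [hAH ((k : ℤ) + 1 - n), hAH ((k : ℤ) + 1)]
      exact hAmono _ _ (hHrange _).1 hlt (hHrange _).2
    linarith
  have hdzero : ∀ k : ℕ, Hf i m ((k : ℤ) + 1) = Hf i m ((k : ℤ) + 1 - n) →
      (p * qpoly n).coeff (k + 1) = (p * qpoly n).coeff k := by
    intro k heq
    have h1 := hd k
    rw [hAH ((k : ℤ) + 1), hAH ((k : ℤ) + 1 - n), heq] at h1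
    linarith
  -- antisymmetry of differences
  have hanti : ∀ k : ℕ, k < M →
      (p * qpoly n).coeff (k + 1) - (p * qpoly n).coeff k
      = -((p * qpoly n).coeff (M - k) - (p * qpoly n).coeff (M - k - 1)) := by
    intro k hk
    have h1 := hsymm k (by rw [hM]; omega)
    have h2 := hsymm (k + 1) (by rw [hM]; omega)
    rw [hM] at h1 h2
    have e1 : M - (k + 1) = M - k - 1 := by omega
    rw [e1] at h2
    linarith
  refine ⟨I, M - I, hIJ, by rw [hM]; omega, ?_, ?_, ?_⟩
  · intro k hk
    exact hdpos k (hI_min k hk)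
  · intro k hIk hkJ
    by_cases hc : 2 * (k + 1) ≤ m + n
    · exact (hdzero k (hzero k hIk hc)).symm
    · have hz := hdzero (M - k - 1) (hzero (M - k - 1) (by omega) (by omega))
      have e1 : M - k - 1 + 1 = M - k := by omega
      rw [e1] at hz
      have ha := hanti k (by omega)
      linarith
  · intro k hJk hkM
    rw [hM] at hkM
    have hlt := hdpos (M - k - 1) (hI_min (M - k - 1) (by omega))
    have e1 : M - k - 1 + 1 = M - k := by omega
    rw [e1] at hlt
    have ha := hanti k hkM
    linarith
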